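/- If N is even, then for every integer k with |k| ≤ ⌊N/2⌋, one has S(⌊N/2⌋ - k) · S(⌊N/2⌋ + k) = 2N cos(ω k / 2). -/

import Mathlib

open Real Finset


lemma abs_one_sub_exp (θ : ℝ) :
    ‖(1 - Complex.exp (θ * Complex.I))‖ = 2 * |Real.sin (θ / 2)| := by
  have h2 : Real.sin (θ/2) ^ 2 = 1/2 - Real.cos θ / 2 := by
    have := Real.sin_sq_eq_half_sub (θ/2)
    rwa [show 2 * (θ/2) = θ by ring] at this
  have hsq : (‖(1 - Complex.exp (θ * Complex.I))‖)^2 = (2 * |Real.sin (θ/2)|)^2 := by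
    rw [Complex.sq_norm, Complex.exp_mul_I, mul_pow, sq_abs]
    simp [Complex.normSq_apply, Complex.sin_ofReal_re, Complex.cos_ofReal_re]
    nlinarith [Real.sin_sq_add_cos_sq θ]
  have h1 : (0:ℝ) ≤ ‖(1 - Complex.exp (θ * Complex.I))‖ := norm_nonneg _
  have h3 : (0:ℝ) ≤ 2 * |Real.sin (θ/2)| := by positivity
  nlinarith

set_option maxHeartbeats 1000000 in
lemma prod_sin_eq (N : ℕ) (hN : 1 ≤ N) :
    ∏ j ∈ Icc 1 (N - 1), (2 * Real.sin (π * j / N)) = N := by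
  obtain ⟨n, rfl⟩ : ∃ n, N = n + 1 := ⟨N - 1, (Nat.succ_pred_eq_of_pos hN).symm⟩
  have hprim := Complex.isPrimitiveRoot_exp (n+1) (Nat.succ_ne_zero n)
  have hp := hprim.prod_one_sub_pow_eq_order
  have habs := congrArg (‖·‖) hp
  rw [Complex.norm_prod] at habs
  have hterm : ∀ k ∈ range n,
      ‖(1 - Complex.exp (2 * π * Complex.I / ((n:ℕ)+1 : ℕ)) ^ (k+1))‖
        = 2 * Real.sin (π * (k+1) / (n+1)) := by
    intro k hk
    rw [← Complex.exp_nat_mul]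
    have hθ : (((k+1 : ℕ)):ℂ) * (2 * π * Complex.I / ((((n:ℕ)+1 : ℕ)):ℂ))
        = ((2 * π * (k+1) / (n+1) : ℝ) : ℂ) * Complex.I := by
      have hne : ((n:ℂ)+1) ≠ 0 := Nat.cast_add_one_ne_zero n
      push_cast
      field_simp
    rw [hθ, abs_one_sub_exp]
    have harg : (2 * π * (↑k+1) / (↑n+1) : ℝ) / 2 = π * (↑k+1) / (↑n+1) := by ring
    rw [harg, abs_of_nonneg]
    apply Real.sin_nonneg_of_nonneg_of_le_pi
    · positivity
    · rw [div_le_iff₀ (by positivity)]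
      have hk' : (k:ℝ) + 1 ≤ (n:ℝ) + 1 := by
        have := Finset.mem_range.mp hk
        have : (k:ℝ) ≤ n := by exact_mod_cast this.le
        linarith
      nlinarith [Real.pi_pos]
  rw [Finset.prod_congr rfl hterm] at habs
  have : ‖((n:ℂ)+1)‖ = (n:ℝ)+1 := by
    rw [show ((n:ℂ)+1) = ((n+1 : ℕ) : ℂ) by push_cast; ring, Complex.norm_natCast]
    push_cast; ring
  rw [this] at habs
  rw [show (n+1) - 1 = n by omega]
  rw [← Finset.Ico_add_one_right_eq_Icc, Finset.prod_Ico_eq_prod_range]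
  push_cast
  refine Eq.trans ?_ habs
  apply Finset.prod_congr rfl
  intro k hk
  ring_nf

lemma key (N m a : ℕ) (hNm : N = 2 * m) (h1 : 1 ≤ m) (ha : a < m) :
    (∏ j ∈ Icc 1 (m - a), (2 * Real.sin (π * j / N)))
      * (∏ j ∈ Icc 1 (m + a), (2 * Real.sin (π * j / N)))
    = 2 * N * Real.cos (π * a / N) := by
  have hN0 : (0:ℝ) < N := by
    have : 0 < N := by omega
    exact_mod_cast this
  set f : ℕ → ℝ := fun j => 2 * Real.sin (π * j / N) with hf
  -- reflection
  have hrefl : ∏ j ∈ Icc 1 (m - a), f j = ∏ j ∈ Ioc (m + a - 1) (N - 1), f j := by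
    apply Finset.prod_nbij' (fun j => N - j) (fun j => N - j)
    · intro x hx; simp only [mem_Icc] at hx; simp only [mem_Ioc]; omega
    · intro x hx; simp only [mem_Ioc] at hx; simp only [mem_Icc]; omega
    · intro x hx; simp only [mem_Icc] at hx; omega
    · intro x hx; simp only [mem_Ioc] at hx; omega
    · intro x hx
      simp only [mem_Icc] at hx
      have hxN : x ≤ N := by omega
      have hc : ((N - x : ℕ) : ℝ) = (N : ℝ) - x := by
        exact Nat.cast_sub hxN
      rw [hf]
      simp only [hc]
      rw [show π * ((N:ℝ) - x) / N = π - π * x / N by field_simp, Real.sin_pi_sub]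
  -- split
  have hsplit : ∏ j ∈ Icc 1 (m + a), f j
      = (∏ j ∈ Ioc 0 (m + a - 1), f j) * f (m + a) := by
    rw [show Icc 1 (m + a) = Ioc 0 (m + a) from (Finset.Icc_add_one_left_eq_Ioc 0 (m+a)).symm]
    rw [show m + a = (m + a - 1) + 1 by omega]
    exact Finset.prod_Ioc_succ_top (by omega) f
  have htot : (∏ j ∈ Ioc 0 (m + a - 1), f j) * (∏ j ∈ Ioc (m + a - 1) (N - 1), f j)
      = ∏ j ∈ Ioc 0 (N - 1), f j :=
    Finset.prod_Ioc_consecutive f (by omega) (by omega)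
  have hN1 : ∏ j ∈ Ioc 0 (N - 1), f j = N := by
    rw [show Ioc 0 (N - 1) = Icc 1 (N - 1) from (Finset.Icc_add_one_left_eq_Ioc 0 (N-1))]
    exact prod_sin_eq N (by omega)
  have hfma : f (m + a) = 2 * Real.cos (π * a / N) := by
    rw [hf]
    have : π * ((m:ℝ) + a) / N = π * a / N + π / 2 := by
      rw [hNm]; push_cast
      have hm0 : (0:ℝ) < m := by positivity
      field_simp; ring
    push_cast
    rw [this, Real.sin_add_pi_div_two]
  rw [hrefl, hsplit, hfma]
  calc (∏ j ∈ Ioc (m + a - 1) (N - 1), f j) * ((∏ j ∈ Ioc 0 (m + a - 1), f j) * (2 * Real.cos (π * a / N)))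
      = ((∏ j ∈ Ioc 0 (m + a - 1), f j) * (∏ j ∈ Ioc (m + a - 1) (N - 1), f j)) * (2 * Real.cos (π * a / N)) := by ring
    _ = 2 * N * Real.cos (π * a / N) := by rw [htot, hN1]; ring

/-- `S N k = ∏_{j=1}^{k} (2 sin(ω j / 2))` with `ω = 2π/N` (so `ω j / 2 = π j / N`),
extended to integer arguments (equal to `1` for `k ≤ 0`). -/
noncomputable def S (N : ℕ) (k : ℤ) : ℝ := ∏ j ∈ Finset.Icc 1 k.toNat, (2 * Real.sin (π * j / N))

lemma main_nonneg (N : ℕ) (hN : 2 ≤ N) (heven : Even N) (k : ℤ) (hk0 : 0 ≤ k)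
    (hk : k ≤ (N : ℤ) / 2) :
    S N ((N : ℤ) / 2 - k) * S N ((N : ℤ) / 2 + k)
      = 2 * N * Real.cos (2 * π / N * k / 2) := by
  obtain ⟨m, hm⟩ := heven
  have hNm : N = 2 * m := by omega
  have h1 : 1 ≤ m := by omega
  have hNZ : (N:ℤ) = 2 * m := by exact_mod_cast hNm
  have hdiv : (N:ℤ) / 2 = (m:ℤ) := by omega
  set a : ℕ := k.toNat with hadef
  have hka : (a:ℤ) = k := Int.toNat_of_nonneg hk0
  have ham : a ≤ m := by omega
  have ht1 : ((N:ℤ)/2 - k).toNat = m - a := by omega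
  have ht2 : ((N:ℤ)/2 + k).toNat = m + a := by omega
  have hkr : (k:ℝ) = (a:ℝ) := by exact_mod_cast hka.symm
  have harg : 2 * π / N * k / 2 = π * a / N := by rw [hkr]; ring
  rw [S, S, ht1, ht2, harg]
  rcases lt_or_eq_of_le ham with hlt | heq
  · exact key N m a hNm h1 hlt
  · subst heq
    have ha0 : (0:ℝ) < (a:ℝ) := by exact_mod_cast h1
    have hz : (2:ℝ) * Real.sin (π * ((a + a : ℕ):ℝ) / N) = 0 := by
      have hπ : π * ((a + a : ℕ):ℝ) / N = π := by
        rw [hNm]; push_cast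
        rw [div_eq_iff (by positivity : ((2:ℝ) * a ≠ 0))]
        ring
      rw [hπ, Real.sin_pi]; ring
    have hL : ∏ j ∈ Icc 1 (a + a), (2 * Real.sin (π * j / N)) = 0 :=
      Finset.prod_eq_zero (by simp only [mem_Icc]; omega) hz
    have hR : Real.cos (π * a / N) = 0 := by
      have hπ : π * (a:ℝ) / N = π / 2 := by
        rw [hNm]; push_cast
        rw [div_eq_div_iff (by positivity : ((2:ℝ) * a ≠ 0)) two_ne_zero]
        ring
      rw [hπ, Real.cos_pi_div_two]
    rw [hL, hR]
    simp

theorem stmt_3 (N : ℕ) (hN : 2 ≤ N) (heven : Even N) (k : ℤ) (hk : |k| ≤ (N : ℤ) / 2) :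
    S N ((N : ℤ) / 2 - k) * S N ((N : ℤ) / 2 + k)
      = 2 * N * Real.cos (2 * π / N * k / 2) := by
  obtain ⟨hk1, hk2⟩ := abs_le.mp hk
  rcases le_total 0 k with hk0 | hk0
  · exact main_nonneg N hN heven k hk0 hk2
  · have h := main_nonneg N hN heven (-k) (by omega) (by omega)
    rw [sub_neg_eq_add, show (N:ℤ)/2 + -k = (N:ℤ)/2 - k by ring] at h
    rw [mul_comm] at h
    rw [h]
    congr 1
    push_cast
    rw [show 2 * π / N * (-(k:ℝ)) / 2 = -(2 * π / N * k / 2) by ring, Real.cos_neg]
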